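/- For every integer n ≥ 1 and every j with 0 ≤ j ≤ n, the number of big Schröder paths of length 2n with exactly j double horizontal steps equals (1/(n−j+1))·C(n,j)·C(2n−j, n), where C denotes the binomial coefficient. -/

import Mathlib

/-- A step of a Schröder path: upstep, downstep, or a *double* horizontal step. -/
inductive SchStep : Type
  | up : SchStep
  | down : SchStep
  | horiz : SchStep
deriving DecidableEq

/-- The number of unit steps a step occupies: `horiz` is a double horizontal step. -/
def SchStep.len : SchStep → ℕ
  | .up => 1
  | .down => 1
  | .horiz => 2

/-- The change in height produced by a step. -/
def SchStep.rise : SchStep → ℤ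
  | .up => 1
  | .down => -1
  | .horiz => 0

/-- The length of a path (a double horizontal step counts 2). -/
def pathLen (p : List SchStep) : ℕ := (p.map SchStep.len).sum

/-- The final height of a path started at height 0. -/
def pathHeight (p : List SchStep) : ℤ := (p.map SchStep.rise).sum

/-- A big Schröder path: ends at height 0 and never goes below the x-axis. -/
def IsBigSchroeder (p : List SchStep) : Prop :=
  pathHeight p = 0 ∧ ∀ q : List SchStep, q <+: p → 0 ≤ pathHeight q

/-- A little Schröder path: a big Schröder path with no double horizontal step at
height 0. -/
def IsLittleSchroeder (p : List SchStep) : Prop :=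
  IsBigSchroeder p ∧ ∀ q r : List SchStep, p = q ++ SchStep.horiz :: r → pathHeight q ≠ 0

open List

namespace SchAux

def conv : SchStep → DyckStep
  | .down => .D
  | _ => .U

def mask (p : List SchStep) : List Bool := p.map (fun s => s == SchStep.horiz)

def core (p : List SchStep) : List DyckStep :=
  (p.filter (fun s => !(s == SchStep.horiz))).map conv

def merge : List Bool → List DyckStep → List SchStep
  | [], _ => []
  | true :: bs, l => .horiz :: merge bs l
  | false :: _, [] => []
  | false :: bs, .U :: l => .up :: merge bs l
  | false :: bs, .D :: l => .down :: merge bs l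

@[simp] lemma mask_nil : mask [] = [] := rfl
@[simp] lemma mask_cons (a : SchStep) (p : List SchStep) :
    mask (a :: p) = (a == SchStep.horiz) :: mask p := rfl
@[simp] lemma core_nil : core [] = [] := rfl
@[simp] lemma core_cons_up (p : List SchStep) : core (.up :: p) = .U :: core p := rfl
@[simp] lemma core_cons_down (p : List SchStep) : core (.down :: p) = .D :: core p := rfl
@[simp] lemma core_cons_horiz (p : List SchStep) : core (.horiz :: p) = core p := rfl

@[simp] lemma mask_length (p : List SchStep) : (mask p).length = p.length := by simp [mask]

lemma count_true_mask (p : List SchStep) : (mask p).count true = p.count SchStep.horiz := by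
  induction p with
  | nil => rfl
  | cons a p ih => cases a <;> simp_all [List.count_cons]

lemma pathLen_eq (p : List SchStep) : pathLen p = p.length + p.count SchStep.horiz := by
  induction p with
  | nil => rfl
  | cons a p ih => cases a <;> simp_all [pathLen, SchStep.len, List.count_cons] <;> omega

lemma pathHeight_eq (p : List SchStep) :
    pathHeight p = (p.count SchStep.up : ℤ) - p.count SchStep.down := by
  induction p with
  | nil => rfl
  | cons a p ih => cases a <;> simp_all [pathHeight, SchStep.rise, List.count_cons] <;> ring

lemma length_counts (p : List SchStep) :
    p.length = p.count SchStep.up + p.count SchStep.down + p.count SchStep.horiz := by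
  induction p with
  | nil => rfl
  | cons a p ih => cases a <;> simp_all [List.count_cons] <;> omega

lemma count_U_core (p : List SchStep) : (core p).count DyckStep.U = p.count SchStep.up := by
  induction p with
  | nil => rfl
  | cons a p ih => cases a <;> simp_all [List.count_cons]

lemma count_D_core (p : List SchStep) : (core p).count DyckStep.D = p.count SchStep.down := by
  induction p with
  | nil => rfl
  | cons a p ih => cases a <;> simp_all [List.count_cons]

lemma merge_mask_core (p : List SchStep) : merge (mask p) (core p) = p := by
  induction p with
  | nil => rfl
  | cons a p ih =>
    cases a with
    | up => show SchStep.up :: merge (mask p) (core p) = _; rw [ih]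
    | down => show SchStep.down :: merge (mask p) (core p) = _; rw [ih]
    | horiz => show SchStep.horiz :: merge (mask p) (core p) = _; rw [ih]

lemma mask_merge : ∀ (bs : List Bool) (l : List DyckStep),
    bs.count false = l.length → mask (merge bs l) = bs
  | [], _, _ => rfl
  | true :: bs, l, h => by
      have := mask_merge bs l (by simpa [List.count_cons] using h)
      simp_all [merge]
  | false :: bs, [], h => by simp [List.count_cons] at h
  | false :: bs, .U :: l, h => by
      have := mask_merge bs l (by simp [List.count_cons] at h; omega)
      simp_all [merge]
  | false :: bs, .D :: l, h => by
      have := mask_merge bs l (by simp [List.count_cons] at h; omega)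
      simp_all [merge]

lemma core_merge : ∀ (bs : List Bool) (l : List DyckStep),
    bs.count false = l.length → core (merge bs l) = l
  | [], [], _ => rfl
  | [], x :: l, h => by simp at h
  | true :: bs, l, h => by
      have := core_merge bs l (by simpa [List.count_cons] using h)
      simp_all [merge]
  | false :: bs, [], h => by simp [List.count_cons] at h
  | false :: bs, .U :: l, h => by
      have := core_merge bs l (by simp [List.count_cons] at h; omega)
      simp_all [merge]
  | false :: bs, .D :: l, h => by
      have := core_merge bs l (by simp [List.count_cons] at h; omega)
      simp_all [merge]

lemma core_append (p q : List SchStep) : core (p ++ q) = core p ++ core q := by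
  simp [core, List.filter_append]

lemma core_prefix {q p : List SchStep} (h : q <+: p) : core q <+: core p := by
  obtain ⟨t, rfl⟩ := h
  exact ⟨core t, (core_append q t).symm⟩

lemma take_core (p : List SchStep) (i : ℕ) :
    ∃ q, q <+: p ∧ (core p).take i = core q := by
  induction p generalizing i with
  | nil => exact ⟨[], prefix_rfl, by simp⟩
  | cons a p ih =>
    cases a with
    | horiz =>
        obtain ⟨q, hq, he⟩ := ih i
        exact ⟨.horiz :: q, (List.cons_prefix_cons).2 ⟨rfl, hq⟩, by simpa using he⟩
    | up =>
        cases i with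
        | zero => exact ⟨[], ⟨SchStep.up :: p, rfl⟩, by simp⟩
        | succ i =>
            obtain ⟨q, hq, he⟩ := ih i
            exact ⟨.up :: q, (List.cons_prefix_cons).2 ⟨rfl, hq⟩, by simpa using he⟩
    | down =>
        cases i with
        | zero => exact ⟨[], ⟨SchStep.down :: p, rfl⟩, by simp⟩
        | succ i =>
            obtain ⟨q, hq, he⟩ := ih i
            exact ⟨.down :: q, (List.cons_prefix_cons).2 ⟨rfl, hq⟩, by simpa using he⟩



lemma count_true_ofFn : ∀ {L : ℕ} (f : Fin L → Bool),
    (List.ofFn f).count true = (Finset.univ.filter fun i => f i = true).card := by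
  intro L
  induction L with
  | zero => intro f; simp
  | succ L ih =>
    intro f
    rw [List.ofFn_succ, List.count_cons, Finset.card_filter, Fin.sum_univ_succ,
      ← Finset.card_filter, ih]
    cases h : f 0 <;> simp [h] <;> omega

lemma ofFn_getD (bs : List Bool) :
    (List.ofFn fun i : Fin bs.length => bs.getD i false) = bs := by
  conv_rhs => rw [← List.ofFn_get bs]
  congr 1
  funext i
  exact List.getD_eq_get bs false i

lemma card_filter_getD (bs : List Bool) :
    (Finset.univ.filter fun i : Fin bs.length => bs.getD i false = true).card
      = bs.count true := by
  rw [← count_true_ofFn, ofFn_getD]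

def boolFinsetEquiv (L k : ℕ) :
    {bs : List Bool // bs.length = L ∧ bs.count true = k} ≃ {s : Finset (Fin L) // s.card = k} where
  toFun x := ⟨Finset.univ.filter fun i => x.1.getD i false = true, by
    obtain ⟨bs, hl, hc⟩ := x
    dsimp only
    subst hl
    rw [card_filter_getD, hc]⟩
  invFun s := ⟨List.ofFn fun i : Fin L => decide ((i : Fin L) ∈ s.1), by
    constructor
    · simp
    · rw [count_true_ofFn]
      simpa using s.2⟩
  left_inv := by
    rintro ⟨bs, hl, hc⟩
    apply Subtype.ext
    dsimp only
    subst hl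
    conv_rhs => rw [← ofFn_getD bs]
    congr 1
    funext i
    simp
  right_inv := by
    rintro ⟨s, hs⟩
    apply Subtype.ext
    dsimp only
    ext i
    simp



lemma forward_facts (n j : ℕ) (p : List SchStep)
    (h : IsBigSchroeder p ∧ pathLen p = 2 * n ∧ p.count SchStep.horiz = j) :
    p.length = 2 * n - j ∧ p.count SchStep.up = n - j ∧ p.count SchStep.down = n - j := by
  obtain ⟨hb, hl, hc⟩ := h
  have h1 := pathHeight_eq p
  have h2 := pathLen_eq p
  have h3 := length_counts p
  rw [hb.1] at h1
  omega

lemma backward_cf (n j : ℕ) (hj : j ≤ n) (bs : List Bool) (w : DyckWord)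
    (hb : bs.length = 2 * n - j ∧ bs.count true = j) (hw : w.semilength = n - j) :
    bs.count false = w.toList.length := by
  have h1 := List.count_false_add_count_true bs
  have h2 := w.two_mul_semilength_eq_length
  omega

def pathEquiv (n j : ℕ) (hj : j ≤ n) :
    {p : List SchStep // IsBigSchroeder p ∧ pathLen p = 2 * n ∧ p.count SchStep.horiz = j} ≃
      ({bs : List Bool // bs.length = 2 * n - j ∧ bs.count true = j} ×
       {w : DyckWord // w.semilength = n - j}) where
  toFun x :=
    (⟨mask x.1, by
        have hf := forward_facts n j x.1 x.2
        rw [mask_length, count_true_mask]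
        exact ⟨hf.1, x.2.2.2⟩⟩,
     ⟨⟨core x.1,
       by
         have hf := forward_facts n j x.1 x.2
         rw [count_U_core, count_D_core, hf.2.1, hf.2.2],
       by
         intro i
         obtain ⟨q, hq, he⟩ := take_core x.1 i
         rw [he, count_U_core, count_D_core]
         have hgt := x.2.1.2 q hq
         rw [pathHeight_eq] at hgt
         omega⟩,
      by
        show (core x.1).count DyckStep.U = n - j
        rw [count_U_core, (forward_facts n j x.1 x.2).2.1]⟩)
  invFun y := ⟨merge y.1.1 y.2.1.toList, by
    obtain ⟨⟨bs, hb⟩, ⟨w, hw⟩⟩ := y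
    have hcf := backward_cf n j hj bs w hb hw
    have hm : mask (merge bs w.toList) = bs := mask_merge _ _ hcf
    have hco : core (merge bs w.toList) = w.toList := core_merge _ _ hcf
    have hlen : (merge bs w.toList).length = 2 * n - j := by
      rw [← mask_length, hm]; exact hb.1
    have hcnt : (merge bs w.toList).count SchStep.horiz = j := by
      rw [← count_true_mask, hm]; exact hb.2
    refine ⟨⟨?_, ?_⟩, ?_, hcnt⟩
    · rw [pathHeight_eq, ← count_U_core, ← count_D_core, hco, w.count_U_eq_count_D]
      ring
    · intro q hq
      have hpre : core q <+: w.toList := hco ▸ core_prefix hq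
      have he : core q = w.toList.take (core q).length := List.prefix_iff_eq_take.1 hpre
      have hd := w.count_D_le_count_U (core q).length
      rw [pathHeight_eq, ← count_U_core, ← count_D_core, he]
      omega
    · rw [pathLen_eq, hlen, hcnt]; omega⟩
  left_inv x := Subtype.ext (merge_mask_core x.1)
  right_inv y := by
    obtain ⟨⟨bs, hb⟩, ⟨w, hw⟩⟩ := y
    have hcf := backward_cf n j hj bs w hb hw
    refine Prod.ext (Subtype.ext ?_) (Subtype.ext (DyckWord.ext ?_))
    · exact mask_merge _ _ hcf
    · exact core_merge _ _ hcf

end SchAux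



/-- The number of big Schröder paths of length `2n` with exactly `j` double horizontal
steps is `(1/(n-j+1)) C(n,j) C(2n-j, n)`. -/
theorem big_schroeder_horiz_count (n j : ℕ) (hn : 1 ≤ n) (hj : j ≤ n) :
    (Nat.card {p : List SchStep //
        IsBigSchroeder p ∧ pathLen p = 2 * n ∧ p.count SchStep.horiz = j} : ℚ) =
      (1 / ((n : ℚ) - j + 1)) * (n.choose j) * ((2 * n - j).choose n) := by
  have key : Nat.card {p : List SchStep //
      IsBigSchroeder p ∧ pathLen p = 2 * n ∧ p.count SchStep.horiz = j}
      = (2 * n - j).choose j * catalan (n - j) := by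
    rw [Nat.card_congr (SchAux.pathEquiv n j hj), Nat.card_prod,
      Nat.card_congr (SchAux.boolFinsetEquiv (2 * n - j) j),
      Nat.card_eq_fintype_card, Nat.card_eq_fintype_card,
      Fintype.card_finset_len, Fintype.card_fin,
      DyckWord.card_dyckWord_semilength_eq_catalan]
  rw [key]
  obtain ⟨a, rfl⟩ : ∃ a, n = j + a := ⟨n - j, by omega⟩
  have e1 : 2 * (j + a) - j = j + 2 * a := by omega
  have e2 : j + a - j = a := by omega
  rw [e1, e2]
  have hcat : ((a : ℚ) + 1) * catalan a = (2 * a).choose a := by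
    have h := succ_mul_catalan_eq_centralBinom a
    have h2 : (a + 1) * catalan a = (2 * a).choose a := by
      rw [h, Nat.centralBinom]
    exact_mod_cast h2
  have hid : (j + 2 * a).choose (j + a) * (j + a).choose j
      = (j + 2 * a).choose j * (2 * a).choose a := by
    have h := Nat.choose_mul (n := j + 2 * a) (k := j + a) (s := j) (by omega)
    simpa using h
  have hidQ : ((j + 2 * a).choose (j + a) : ℚ) * (j + a).choose j
      = (j + 2 * a).choose j * (2 * a).choose a := by exact_mod_cast hid
  have ha : ((a : ℚ) + 1) ≠ 0 := by positivity
  push_cast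
  field_simp
  linear_combination ((j + 2 * a).choose j : ℚ) * hcat - hidQ
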